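/- arXiv:1006.1759 — 2 statements merged into one kernel-verified Lean document; each statement's English description precedes it below -/
import Mathlib

section
/- Let K be a field, n ≥ 2 and r ≥ 1 integers, and set s = r + (n−1). Let P be the s×r matrix over L_n whose top-left (r−1)×(r−1) block is the identity, whose bottom-right n×1 block is the column (x_1,…,x_n)ᵗ, and whose other entries are 0; let Q be the r×s matrix whose top-left (r−1)×(r−1) block is the identity, whose bottom-right 1×n block is the row (y_1,…,y_n), and whose other entries are 0. Then the map φ: M_r(L_n) → M_s(L_n), φ(A) = P·A·Q, is a K-algebra isomorphism. -/
open scoped BigOperators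

/-- Defining relations of the Leavitt algebra `L_K(1,n)`. -/
inductive LeavittRel (K : Type) [Field K] (n : ℕ) :
    FreeAlgebra K (Fin n ⊕ Fin n) → FreeAlgebra K (Fin n ⊕ Fin n) → Prop
  | xy (i j : Fin n) :
      LeavittRel K n (FreeAlgebra.ι K (Sum.inl i) * FreeAlgebra.ι K (Sum.inr j))
        (if i = j then 1 else 0)
  | yx :
      LeavittRel K n (∑ j : Fin n, FreeAlgebra.ι K (Sum.inr j) * FreeAlgebra.ι K (Sum.inl j)) 1

/-- The Leavitt algebra `L_n = L_K(1,n)`. -/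
abbrev Leavitt (K : Type) [Field K] (n : ℕ) := RingQuot (LeavittRel K n)

/-- The generator `x_i` of the Leavitt algebra. -/
noncomputable def lx (K : Type) [Field K] (n : ℕ) (i : Fin n) : Leavitt K n :=
  RingQuot.mkAlgHom K (LeavittRel K n) (FreeAlgebra.ι K (Sum.inl i))

/-- The generator `y_i` of the Leavitt algebra. -/
noncomputable def ly (K : Type) [Field K] (n : ℕ) (i : Fin n) : Leavitt K n :=
  RingQuot.mkAlgHom K (LeavittRel K n) (FreeAlgebra.ι K (Sum.inr i))

/-- `x_I = x_{i_k} ⋯ x_{i_1}` for a word `I = (i_1, …, i_k)`. -/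
noncomputable def xW (K : Type) [Field K] (n : ℕ) (I : List (Fin n)) : Leavitt K n :=
  (I.reverse.map (lx K n)).prod

/-- `y_I = y_{i_1} ⋯ y_{i_k}` for a word `I = (i_1, …, i_k)`. -/
noncomputable def yW (K : Type) [Field K] (n : ℕ) (I : List (Fin n)) : Leavitt K n :=
  (I.map (ly K n)).prod

/-- Auxiliary anti-homomorphism used to construct the involution on `L_n`. -/
noncomputable def leavittStarAux (K : Type) [Field K] (n : ℕ) :
    FreeAlgebra K (Fin n ⊕ Fin n) →ₐ[K] (Leavitt K n)ᵐᵒᵖ :=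
  FreeAlgebra.lift K fun s =>
    MulOpposite.op (RingQuot.mkAlgHom K (LeavittRel K n) (FreeAlgebra.ι K s.swap))

theorem leavittStarAux_rel (K : Type) [Field K] (n : ℕ) :
    ∀ ⦃a b : FreeAlgebra K (Fin n ⊕ Fin n)⦄, LeavittRel K n a b →
      leavittStarAux K n a = leavittStarAux K n b := by
  intro a b h
  induction h with
  | xy i j =>
    have h1 : (RingQuot.mkAlgHom K (LeavittRel K n))
        (FreeAlgebra.ι K (Sum.inl j) * FreeAlgebra.ι K (Sum.inr i)) =
        (RingQuot.mkAlgHom K (LeavittRel K n)) (if j = i then 1 else 0) :=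
      RingQuot.mkAlgHom_rel K (LeavittRel.xy j i)
    simp only [leavittStarAux, map_mul, FreeAlgebra.lift_ι_apply, Sum.swap_inl, Sum.swap_inr]
    rw [← MulOpposite.op_mul, ← map_mul, h1]
    by_cases hij : i = j
    · subst hij; simp
    · simp [hij, Ne.symm hij]
  | yx =>
    have h1 : (RingQuot.mkAlgHom K (LeavittRel K n))
        (∑ j : Fin n, FreeAlgebra.ι K (Sum.inr j) * FreeAlgebra.ι K (Sum.inl j)) =
        (RingQuot.mkAlgHom K (LeavittRel K n)) 1 :=
      RingQuot.mkAlgHom_rel K LeavittRel.yx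
    simp only [leavittStarAux, map_sum, map_mul, FreeAlgebra.lift_ι_apply, Sum.swap_inl,
      Sum.swap_inr, map_one]
    have key : ∀ x : Fin n,
        MulOpposite.op ((RingQuot.mkAlgHom K (LeavittRel K n)) (FreeAlgebra.ι K (Sum.inl x))) *
          MulOpposite.op ((RingQuot.mkAlgHom K (LeavittRel K n)) (FreeAlgebra.ι K (Sum.inr x))) =
        MulOpposite.opAddEquiv ((RingQuot.mkAlgHom K (LeavittRel K n))
          (FreeAlgebra.ι K (Sum.inr x) * FreeAlgebra.ι K (Sum.inl x))) := by
      intro x; rw [map_mul]; rfl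
    rw [Finset.sum_congr rfl fun x _ => key x, ← map_sum, ← map_sum, h1, map_one]
    rfl

/-- The involution `*` on the Leavitt algebra, as an algebra map into the opposite algebra. -/
noncomputable def lstarHom (K : Type) [Field K] (n : ℕ) :
    Leavitt K n →ₐ[K] (Leavitt K n)ᵐᵒᵖ :=
  RingQuot.liftAlgHom K ⟨leavittStarAux K n, leavittStarAux_rel K n⟩

/-- The involution `*` on the Leavitt algebra: the unique `K`-linear ring anti-automorphism
with `x_i* = y_i` and `y_i* = x_i`. -/
noncomputable def lstar (K : Type) [Field K] (n : ℕ) (a : Leavitt K n) : Leavitt K n :=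
  (lstarHom K n a).unop

/-- An element of `L_n` which is a finite (possibly empty) sum of monomials `y_I x_J`. -/
def IsSumYX (K : Type) [Field K] (n : ℕ) (a : Leavitt K n) : Prop :=
  ∃ (m : ℕ) (I J : Fin m → List (Fin n)), a = ∑ i, yW K n (I i) * xW K n (J i)

/-- The induced involution on matrices over `L_n`: `(A*)_{ij} = (A_{ji})*`. -/
noncomputable def mstar (K : Type) [Field K] (n r : ℕ)
    (A : Matrix (Fin r) (Fin r) (Leavitt K n)) : Matrix (Fin r) (Fin r) (Leavitt K n) :=
  fun i j => lstar K n (A j i)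

/-- The set `P_{n,r}` of unitary matrices over `L_n` all of whose entries are finite sums of
monomials `y_I x_J`. -/
def PsetM (K : Type) [Field K] (n r : ℕ) : Set (Matrix (Fin r) (Fin r) (Leavitt K n)) :=
  {A | (A * mstar K n r A = 1 ∧ mstar K n r A * A = 1) ∧ ∀ i j, IsSumYX K n (A i j)}

/-- `B` is a complete prefix code: a finite nonempty set of pairwise incomparable words such
that every word is comparable with some element of `B`. -/
def IsCPC (n : ℕ) (B : Set (List (Fin n))) : Prop :=
  B.Finite ∧ B.Nonempty ∧ (∀ u ∈ B, ∀ v ∈ B, u ≠ v → ¬ u <+: v) ∧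
    (∀ w : List (Fin n), ∃ u ∈ B, u <+: w ∨ w <+: u)
/-- `x_{k+1}` indexed by a natural number `k` (junk value `0` out of range). -/
noncomputable def lxN (K : Type) [Field K] (n : ℕ) (k : ℕ) : Leavitt K n :=
  if h : k < n then lx K n ⟨k, h⟩ else 0

/-- `y_{k+1}` indexed by a natural number `k` (junk value `0` out of range). -/
noncomputable def lyN (K : Type) [Field K] (n : ℕ) (k : ℕ) : Leavitt K n :=
  if h : k < n then ly K n ⟨k, h⟩ else 0

lemma lxy_mul (K : Type) [Field K] (n : ℕ) (i j : Fin n) :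
    lx K n i * ly K n j = if i = j then 1 else 0 := by
  have h := RingQuot.mkAlgHom_rel K (LeavittRel.xy (K := K) i j)
  rw [map_mul] at h
  unfold lx ly
  rw [h]
  split_ifs <;> simp

lemma lyx_sum (K : Type) [Field K] (n : ℕ) :
    (∑ j : Fin n, ly K n j * lx K n j) = 1 := by
  have h := RingQuot.mkAlgHom_rel K (LeavittRel.yx (K := K) (n := n))
  simp only [map_sum, map_mul, map_one] at h
  unfold ly lx
  exact h

lemma lxyN_mul (K : Type) [Field K] (n : ℕ) (a b : ℕ) (ha : a < n) (hb : b < n) :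
    lxN K n a * lyN K n b = if a = b then 1 else 0 := by
  rw [lxN, lyN, dif_pos ha, dif_pos hb, lxy_mul]
  simp [Fin.ext_iff]

lemma lxN_eq (K : Type) [Field K] (n : ℕ) (m : Fin n) : lxN K n ↑m = lx K n m := by
  simp [lxN, m.isLt]

lemma lyN_eq (K : Type) [Field K] (n : ℕ) (m : Fin n) : lyN K n ↑m = ly K n m := by
  simp [lyN, m.isLt]

/-- Let `s = r + (n-1)`, let `P` be the `s × r` matrix whose top-left `(r-1) × (r-1)` block is
the identity, whose bottom-right `n × 1` block is the column `(x_1, …, x_n)ᵗ` and whose other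
entries are `0`, and let `Q` be the `r × s` matrix whose top-left `(r-1) × (r-1)` block is the
identity, whose bottom-right `1 × n` block is the row `(y_1, …, y_n)` and whose other entries
are `0`. Then `A ↦ P · A · Q` is a `K`-algebra isomorphism `M_r(L_n) → M_s(L_n)`. -/
theorem leavitt_matrix_iso_explicit (K : Type) [Field K] (n : ℕ) (hn : 2 ≤ n)
    (r : ℕ) (hr : 1 ≤ r)
    (P : Matrix (Fin (r + (n - 1))) (Fin r) (Leavitt K n))
    (Q : Matrix (Fin r) (Fin (r + (n - 1))) (Leavitt K n))
    (hP : ∀ i j, P i j =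
      if (i : ℕ) < r - 1 then (if (i : ℕ) = (j : ℕ) then 1 else 0)
      else if (j : ℕ) = r - 1 then lxN K n ((i : ℕ) - (r - 1)) else 0)
    (hQ : ∀ i j, Q i j =
      if (j : ℕ) < r - 1 then (if (i : ℕ) = (j : ℕ) then 1 else 0)
      else if (i : ℕ) = r - 1 then lyN K n ((j : ℕ) - (r - 1)) else 0) :
    ∃ e : Matrix (Fin r) (Fin r) (Leavitt K n) ≃ₐ[K]
        Matrix (Fin (r + (n - 1))) (Fin (r + (n - 1))) (Leavitt K n),
      ∀ A, e A = P * A * Q := by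
  have hsm : ∀ m : Fin n, r - 1 + (m : ℕ) < r + (n - 1) := fun m => by
    have := m.isLt; omega
  -- Q * P = 1
  have hQP : Q * P = 1 := by
    ext i j
    rw [Matrix.mul_apply, Matrix.one_apply]
    by_cases hi : (i : ℕ) < r - 1
    · rw [Finset.sum_eq_single (Fin.castLE (Nat.le_add_right r (n - 1)) i)]
      · simp [hQ, hP, Fin.coe_castLE, hi, Fin.ext_iff]
      · intro b _ hb
        rw [hQ]
        by_cases hbr : (b : ℕ) < r - 1
        · rw [if_pos hbr, if_neg, zero_mul]
          intro h
          exact hb (Fin.ext (show (b : ℕ) = (i : ℕ) from h.symm))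
        · rw [if_neg hbr, if_neg (by omega), zero_mul]
      · intro h; exact absurd (Finset.mem_univ _) h
    · have hi' : (i : ℕ) = r - 1 := by have := i.isLt; omega
      by_cases hj : (j : ℕ) < r - 1
      · rw [if_neg (by intro h; rw [h] at hi; omega)]
        apply Finset.sum_eq_zero
        intro k _
        rw [hQ, hP]
        by_cases hk : (k : ℕ) < r - 1
        · rw [if_pos hk, if_neg (by omega), zero_mul]
        · rw [if_neg hk, if_pos hi', if_neg hk, if_neg (by omega), mul_zero]
      · have hj' : (j : ℕ) = r - 1 := by have := j.isLt; omega
        rw [if_pos (Fin.ext (by omega))]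
        set emb : Fin n ↪ Fin (r + (n - 1)) :=
          ⟨fun m => ⟨r - 1 + (m : ℕ), hsm m⟩, by
            intro a b h
            have : r - 1 + (a : ℕ) = r - 1 + (b : ℕ) := congrArg Fin.val h
            exact Fin.ext (by omega)⟩ with hembd
        have hval : ∀ m : Fin n, ((emb m : Fin (r + (n - 1))) : ℕ) = r - 1 + (m : ℕ) :=
          fun m => rfl
        have hzero : ∀ k ∈ Finset.univ, k ∉ Finset.univ.map emb →
            Q i k * P k j = 0 := by
          intro k _ hk
          have hklt : (k : ℕ) < r - 1 := by
            by_contra hge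
            apply hk
            rw [Finset.mem_map]
            refine ⟨⟨(k : ℕ) - (r - 1), by have := k.isLt; omega⟩, Finset.mem_univ _,
              Fin.ext ?_⟩
            rw [hval]
            show r - 1 + ((k : ℕ) - (r - 1)) = (k : ℕ)
            omega
          rw [hQ, if_pos hklt, if_neg (by omega), zero_mul]
        rw [← Finset.sum_subset (Finset.subset_univ (Finset.univ.map emb)) hzero,
          Finset.sum_map]
        have hterm : ∀ m : Fin n, Q i (emb m) * P (emb m) j = ly K n m * lx K n m := by
          intro m
          rw [hQ, hP]
          have h1 : ¬ ((emb m : ℕ) < r - 1) := by rw [hval]; omega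
          rw [if_neg h1, if_pos hi', if_neg h1, if_pos hj']
          have h2 : ((emb m : ℕ)) - (r - 1) = (m : ℕ) := by rw [hval]; omega
          rw [h2, lxN_eq, lyN_eq]
        rw [Finset.sum_congr rfl fun m _ => hterm m, lyx_sum]
  -- P * Q = 1
  have hPQ : P * Q = 1 := by
    ext i j
    rw [Matrix.mul_apply, Matrix.one_apply]
    by_cases hi : (i : ℕ) < r - 1
    · rw [Finset.sum_eq_single (⟨(i : ℕ), by omega⟩ : Fin r)]
      · rw [hP, hQ]
        show (if (i : ℕ) < r - 1 then if (i : ℕ) = (i : ℕ) then (1 : Leavitt K n) else 0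
            else if (i : ℕ) = r - 1 then lxN K n ((i : ℕ) - (r - 1)) else 0) *
            (if (j : ℕ) < r - 1 then if (i : ℕ) = (j : ℕ) then 1 else 0
            else if (i : ℕ) = r - 1 then lyN K n ((j : ℕ) - (r - 1)) else 0) =
            if i = j then 1 else 0
        rw [if_pos hi, if_pos rfl, one_mul]
        by_cases hj : (j : ℕ) < r - 1
        · by_cases he : (i : ℕ) = (j : ℕ)
          · rw [if_pos hj, if_pos he, if_pos (Fin.ext he)]
          · rw [if_pos hj, if_neg he, if_neg (fun h => he (congrArg Fin.val h))]
        · rw [if_neg hj, if_neg (by omega),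
            if_neg (by intro h; rw [Fin.ext_iff] at h; omega)]
      · intro b _ hb
        rw [hP, if_pos hi, if_neg, zero_mul]
        intro h
        exact hb (Fin.ext (show (b : ℕ) = (i : ℕ) from h.symm))
      · intro h; exact absurd (Finset.mem_univ _) h
    · rw [Finset.sum_eq_single (⟨r - 1, by omega⟩ : Fin r)]
      · rw [hP, hQ]
        show (if (i : ℕ) < r - 1 then if (i : ℕ) = r - 1 then (1 : Leavitt K n) else 0
            else if r - 1 = r - 1 then lxN K n ((i : ℕ) - (r - 1)) else 0) *
            (if (j : ℕ) < r - 1 then if r - 1 = (j : ℕ) then 1 else 0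
            else if r - 1 = r - 1 then lyN K n ((j : ℕ) - (r - 1)) else 0) =
            if i = j then 1 else 0
        rw [if_neg hi, if_pos rfl]
        by_cases hj : (j : ℕ) < r - 1
        · rw [if_pos hj, if_neg (by omega), mul_zero,
            if_neg (by intro h; rw [Fin.ext_iff] at h; omega)]
        · rw [if_neg hj, if_pos rfl,
            lxyN_mul K n _ _ (by have := i.isLt; omega) (by have := j.isLt; omega)]
          have hiff : ((i : ℕ) - (r - 1) = (j : ℕ) - (r - 1)) ↔ i = j := by
            rw [Fin.ext_iff]; omega
          by_cases he : i = j
          · rw [if_pos (hiff.mpr he), if_pos he]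
          · rw [if_neg (fun h => he (hiff.mp h)), if_neg he]
      · intro b _ hb
        rw [hP, if_neg hi, if_neg, zero_mul]
        intro h
        exact hb (Fin.ext (show (b : ℕ) = r - 1 from h))
      · intro h; exact absurd (Finset.mem_univ _) h
  have key : ∀ B : Matrix (Fin r) (Fin r) (Leavitt K n), Q * (P * B * Q) = B * Q := by
    intro B
    rw [Matrix.mul_assoc P B Q, ← Matrix.mul_assoc Q P (B * Q), hQP, Matrix.one_mul]
  refine ⟨AlgEquiv.ofRingEquiv
    (f := ⟨⟨fun A => P * A * Q, fun B => Q * B * P, ?_, ?_⟩, ?_, ?_⟩) ?_, fun A => rfl⟩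
  · intro A
    simp only
    rw [Matrix.mul_assoc P A Q, ← Matrix.mul_assoc Q P (A * Q), hQP, Matrix.one_mul,
      Matrix.mul_assoc A Q P, hQP, Matrix.mul_one]
  · intro B
    simp only
    rw [Matrix.mul_assoc Q B P, ← Matrix.mul_assoc P Q (B * P), hPQ, Matrix.one_mul,
      Matrix.mul_assoc B P Q, hPQ, Matrix.mul_one]
  · intro A B
    simp only
    rw [Matrix.mul_assoc (P * A) Q (P * B * Q), key B, ← Matrix.mul_assoc (P * A) B Q,
      Matrix.mul_assoc P A B]
  · intro A B
    simp only [Matrix.add_mul, Matrix.mul_add]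
  · intro c
    simp only [RingEquiv.coe_mk, Equiv.coe_fn_mk]
    rw [Algebra.algebraMap_eq_smul_one, Algebra.algebraMap_eq_smul_one,
      Matrix.mul_smul, Matrix.smul_mul, Matrix.mul_one, hPQ]
end

section
/- Let K be a field, n ≥ 2 an integer, and m ≥ 1. Let I_1,…,I_m and J_1,…,J_m be words over {1,…,n} such that {I_1,…,I_m} and {J_1,…,J_m} are each complete prefix codes consisting of m distinct words. Then the element α = Σ_{i=1}^m y_{I_i} x_{J_i} of L_n satisfies αα* = α*α = 1, i.e., α is a unitary of L_n. -/
open scoped BigOperators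

section Aux

variable (K : Type) [Field K] (n : ℕ)

lemma lx_mul_ly (i j : Fin n) : lx K n i * ly K n j = if i = j then 1 else 0 := by
  have h := RingQuot.mkAlgHom_rel K (LeavittRel.xy (K := K) (n := n) i j)
  rw [map_mul] at h
  simpa [lx, ly, apply_ite (RingQuot.mkAlgHom K (LeavittRel K n))] using h

lemma sum_ly_lx : ∑ j : Fin n, ly K n j * lx K n j = 1 := by
  have h := RingQuot.mkAlgHom_rel K (LeavittRel.yx (K := K) (n := n))
  rw [map_sum, map_one] at h
  simpa [lx, ly] using h

@[simp] lemma xW_nil : xW K n [] = 1 := rfl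
@[simp] lemma yW_nil : yW K n [] = 1 := rfl

lemma xW_cons (a : Fin n) (u : List (Fin n)) : xW K n (a :: u) = xW K n u * lx K n a := by
  simp [xW]

lemma yW_cons (a : Fin n) (u : List (Fin n)) : yW K n (a :: u) = ly K n a * yW K n u := by
  simp [yW]

lemma xW_append (u v : List (Fin n)) : xW K n (u ++ v) = xW K n v * xW K n u := by
  simp [xW]

lemma yW_append (u v : List (Fin n)) : yW K n (u ++ v) = yW K n u * yW K n v := by
  simp [yW]

lemma xW_mul_yW_self (u : List (Fin n)) : xW K n u * yW K n u = 1 := by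
  induction u with
  | nil => simp
  | cons a u ih =>
    rw [xW_cons, yW_cons, mul_assoc, ← mul_assoc (lx K n a), lx_mul_ly]
    simp [ih]

lemma xW_mul_yW_zero (u : List (Fin n)) : ∀ v : List (Fin n), ¬ u <+: v → ¬ v <+: u →
    xW K n u * yW K n v = 0 := by
  induction u with
  | nil => intro v h _; exact absurd (List.nil_prefix) h
  | cons a u ih =>
    intro v h1 h2
    cases v with
    | nil => exact absurd (List.nil_prefix) h2
    | cons b v =>
      rw [xW_cons, yW_cons, mul_assoc, ← mul_assoc (lx K n a), lx_mul_ly]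
      by_cases hab : a = b
      · subst hab
        have h1' : ¬ u <+: v := fun hp => h1 (List.cons_prefix_cons.mpr ⟨rfl, hp⟩)
        have h2' : ¬ v <+: u := fun hp => h2 (List.cons_prefix_cons.mpr ⟨rfl, hp⟩)
        simp [ih v h1' h2']
      · simp [hab]

lemma lstar_lx (i : Fin n) : lstar K n (lx K n i) = ly K n i := by
  simp [lstar, lstarHom, lx, ly, leavittStarAux, RingQuot.liftAlgHom_mkAlgHom_apply]

lemma lstar_ly (i : Fin n) : lstar K n (ly K n i) = lx K n i := by
  simp [lstar, lstarHom, lx, ly, leavittStarAux, RingQuot.liftAlgHom_mkAlgHom_apply]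

lemma lstar_mul (a b : Leavitt K n) : lstar K n (a * b) = lstar K n b * lstar K n a := by
  simp [lstar, map_mul]

lemma lstar_sum {ι : Type*} (s : Finset ι) (f : ι → Leavitt K n) :
    lstar K n (∑ i ∈ s, f i) = ∑ i ∈ s, lstar K n (f i) := by
  simp [lstar, map_sum]

lemma lstar_xW (u : List (Fin n)) : lstar K n (xW K n u) = yW K n u := by
  induction u with
  | nil => simp [lstar, map_one]
  | cons a u ih => rw [xW_cons, lstar_mul, lstar_lx, ih, yW_cons]

lemma lstar_yW (u : List (Fin n)) : lstar K n (yW K n u) = xW K n u := by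
  induction u with
  | nil => simp [lstar, map_one]
  | cons a u ih => rw [yW_cons, lstar_mul, lstar_ly, ih, xW_cons]

end Aux

section CPC

variable (K : Type) [Field K] (n : ℕ)

lemma prefix_concat_cases {α : Type*} {l u : List α} {a : α} (h : l <+: u ++ [a]) :
    l = u ++ [a] ∨ l <+: u := by
  rcases le_or_gt l.length u.length with hle | hlt
  · exact Or.inr (List.prefix_of_prefix_length_le h (u.prefix_append [a]) hle)
  · left
    apply h.eq_of_length
    have := h.length_le
    simp only [List.length_append, List.length_cons, List.length_nil] at this ⊢
    omega

lemma cpc_sum (hn : 1 ≤ n) : ∀ (N : ℕ) (B : Finset (List (Fin n))),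
    (∑ u ∈ B, u.length) < N → IsCPC n ↑B →
    ∑ u ∈ B, yW K n u * xW K n u = 1 := by
  intro N
  induction N with
  | zero => intro B h; omega
  | succ N ih =>
    intro B hlen hB
    obtain ⟨-, hne, hinc, hcomp⟩ := hB
    by_cases hnil : ([] : List (Fin n)) ∈ B
    · have hBeq : B = {[]} := by
        apply Finset.eq_singleton_iff_unique_mem.mpr
        refine ⟨hnil, fun u hu => ?_⟩
        by_contra hne'
        exact hinc [] hnil u hu (Ne.symm hne') List.nil_prefix
      simp [hBeq]
    · -- pick w of maximal length
      obtain ⟨w, hw, hwmax⟩ := B.exists_max_image (fun u => u.length)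
        (by simpa [Finset.Nonempty] using hne)
      have hwne : w ≠ [] := fun h => hnil (h ▸ hw)
      set w' := w.dropLast with hw'
      have hwcat : w' ++ [w.getLast hwne] = w := List.dropLast_append_getLast hwne
      have hw'len : w'.length + 1 = w.length := by
        rw [← hwcat]; simp
      have hw'w : w' <+: w := by rw [← hwcat]; exact w'.prefix_append _
      -- every child of w' is in B
      have hchild : ∀ j : Fin n, w' ++ [j] ∈ B := by
        intro j
        obtain ⟨u, hu, hcu⟩ := hcomp (w' ++ [j])
        rcases hcu with hcu | hcu
        · rcases prefix_concat_cases hcu with h | h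
          · rwa [h] at hu
          · exfalso
            have huw : u <+: w := h.trans hw'w
            have : u ≠ w := by
              intro he; subst he
              have := h.length_le; omega
            exact hinc u hu w hw this huw
        · have hlen2 : (w' ++ [j]).length = u.length := by
            have h1 := hcu.length_le
            have h2 := hwmax u hu
            simp only [List.length_append, List.length_cons, List.length_nil] at h1 ⊢
            omega
          have he : w' ++ [j] = u := hcu.eq_of_length hlen2
          rw [← he] at hu; exact hu
      have hw'notB : w' ∉ B := by
        intro h
        refine hinc w' h w hw ?_ hw'w
        intro he; rw [he] at hw'len; omega
      -- the set of children
      set S : Finset (List (Fin n)) := Finset.image (fun j : Fin n => w' ++ [j]) Finset.univ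
        with hS
      have hSsub : S ⊆ B := by
        intro u hu
        simp only [hS, Finset.mem_image] at hu
        obtain ⟨j, -, rfl⟩ := hu
        exact hchild j
      set B' : Finset (List (Fin n)) := insert w' (B \ S) with hB'
      have hw'notBS : w' ∉ B \ S := fun h => hw'notB (Finset.mem_sdiff.mp h).1
      -- membership facts about B \ S
      have hBS : ∀ u ∈ B \ S, ¬ u <+: w' ∧ ¬ w' <+: u := by
        intro u hu
        obtain ⟨huB, huS⟩ := Finset.mem_sdiff.mp hu
        constructor
        · intro h
          have huw : u <+: w := h.trans hw'w
          refine hinc u huB w hw ?_ huw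
          intro he; subst he
          have := h.length_le; omega
        · intro h
          obtain ⟨t, rfl⟩ := h
          cases t with
          | nil => exact hw'notB (by simpa using huB)
          | cons j t =>
            have hpre : w' ++ [j] <+: w' ++ j :: t := by
              refine ⟨t, by simp⟩
            have hne2 : w' ++ [j] ≠ w' ++ j :: t := by
              intro he
              apply huS
              simp only [hS, Finset.mem_image]
              exact ⟨j, Finset.mem_univ j, he⟩
            exact hinc _ (hchild j) _ huB hne2 hpre
      -- B' is a CPC
      have hB'cpc : IsCPC n ↑B' := by
        refine ⟨B'.finite_toSet, ⟨w', by simp [hB']⟩, ?_, ?_⟩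
        · intro u hu v hv huv
          simp only [hB', Finset.coe_insert, Set.mem_insert_iff, Finset.mem_coe] at hu hv
          rcases hu with rfl | hu
          · rcases hv with rfl | hv
            · exact absurd rfl huv
            · exact (hBS v hv).2
          · rcases hv with rfl | hv
            · exact (hBS u hu).1
            · exact hinc u (Finset.mem_sdiff.mp hu).1 v (Finset.mem_sdiff.mp hv).1 huv
        · intro v
          obtain ⟨u, hu, hcu⟩ := hcomp v
          by_cases huS : u ∈ S
          · refine ⟨w', by simp [hB'], ?_⟩
            simp only [hS, Finset.mem_image] at huS
            obtain ⟨j, -, rfl⟩ := huS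
            rcases hcu with hcu | hcu
            · exact Or.inl ((w'.prefix_append [j]).trans hcu)
            · rcases prefix_concat_cases hcu with h | h
              · exact Or.inl (h ▸ w'.prefix_append [j])
              · exact Or.inr h
          · refine ⟨u, ?_, hcu⟩
            simp only [hB', Finset.coe_insert, Set.mem_insert_iff, Finset.mem_coe,
              Finset.mem_sdiff]
            exact Or.inr ⟨Finset.mem_coe.mp hu, huS⟩
      -- length decreases
      have hScard : ∀ u ∈ S, u.length = w'.length + 1 := by
        intro u hu
        simp only [hS, Finset.mem_image] at hu
        obtain ⟨j, -, rfl⟩ := hu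
        simp
      have hSlen : ∑ u ∈ S, u.length = n * (w'.length + 1) := by
        have hcard : S.card = n := by
          rw [hS, Finset.card_image_of_injective _ (fun a b h => by simpa using h)]
          simp
        rw [Finset.sum_congr rfl hScard, Finset.sum_const, hcard, smul_eq_mul]
      have hSne : (w' ++ [⟨0, hn⟩]) ∈ S := by
        simp only [hS, Finset.mem_image]
        exact ⟨⟨0, hn⟩, Finset.mem_univ _, rfl⟩
      have hlen' : (∑ u ∈ B', u.length) < N := by
        have hsplit : ∑ u ∈ B, u.length = ∑ u ∈ B \ S, u.length + ∑ u ∈ S, u.length := by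
          rw [Finset.sum_sdiff hSsub]
        rw [hB', Finset.sum_insert hw'notBS]
        have : n * (w'.length + 1) ≥ w'.length + 1 := Nat.le_mul_of_pos_left _ hn
        omega
      -- sum over children
      have hchildsum : ∑ u ∈ S, yW K n u * xW K n u = yW K n w' * xW K n w' := by
        rw [hS, Finset.sum_image (by intro a _ b _ h; simpa using h)]
        have : ∀ j : Fin n, yW K n (w' ++ [j]) * xW K n (w' ++ [j]) =
            yW K n w' * (ly K n j * lx K n j) * xW K n w' := by
          intro j
          rw [yW_append, xW_append]
          simp only [yW_cons, yW_nil, xW_cons, xW_nil, mul_one, one_mul]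
          simp [mul_assoc]
        rw [Finset.sum_congr rfl (fun j _ => this j), ← Finset.sum_mul, ← Finset.mul_sum,
          sum_ly_lx]
        simp
      have hfin := ih B' hlen' hB'cpc
      rw [hB', Finset.sum_insert hw'notBS] at hfin
      calc ∑ u ∈ B, yW K n u * xW K n u
          = ∑ u ∈ B \ S, yW K n u * xW K n u + ∑ u ∈ S, yW K n u * xW K n u :=
            (Finset.sum_sdiff hSsub).symm
        _ = yW K n w' * xW K n w' + ∑ u ∈ B \ S, yW K n u * xW K n u := by
            rw [hchildsum]; exact add_comm _ _
        _ = 1 := hfin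

end CPC

lemma unit_aux (K : Type) [Field K] (n : ℕ) (hn : 2 ≤ n) (m : ℕ)
    (I J : Fin m → List (Fin n)) (hI : Function.Injective I) (hJ : Function.Injective J)
    (hIc : IsCPC n (Set.range I)) (hJc : IsCPC n (Set.range J)) :
    (∑ i, yW K n (I i) * xW K n (J i)) * (∑ i, yW K n (J i) * xW K n (I i)) = 1 := by
  classical
  have hJcross : ∀ i k, xW K n (J i) * yW K n (J k) = if i = k then 1 else 0 := by
    intro i k
    by_cases hik : i = k
    · subst hik; simp [xW_mul_yW_self]
    · rw [if_neg hik]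
      have hne : J i ≠ J k := fun h => hik (hJ h)
      exact xW_mul_yW_zero K n (J i) (J k)
        (hJc.2.2.1 (J i) (Set.mem_range_self i) (J k) (Set.mem_range_self k) hne)
        (hJc.2.2.1 (J k) (Set.mem_range_self k) (J i) (Set.mem_range_self i) hne.symm)
  have hcpcI : ∑ i, yW K n (I i) * xW K n (I i) = 1 := by
    have hBc : IsCPC n ↑(Finset.image I Finset.univ) := by
      have he : (↑(Finset.image I Finset.univ) : Set (List (Fin n))) = Set.range I := by
        ext u; simp
      rw [he]; exact hIc
    have h := cpc_sum K n (by omega)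
      (∑ u ∈ Finset.image I Finset.univ, u.length + 1) _ (by omega) hBc
    rwa [Finset.sum_image (fun a _ b _ h => hI h)] at h
  calc (∑ i, yW K n (I i) * xW K n (J i)) * (∑ i, yW K n (J i) * xW K n (I i))
      = ∑ i, ∑ k, (yW K n (I i) * xW K n (J i)) * (yW K n (J k) * xW K n (I k)) := by
        rw [Finset.sum_mul]
        exact Finset.sum_congr rfl fun i _ => Finset.mul_sum _ _ _
    _ = ∑ i, yW K n (I i) * xW K n (I i) := by
        refine Finset.sum_congr rfl fun i _ => ?_
        have hterm : ∀ k, (yW K n (I i) * xW K n (J i)) * (yW K n (J k) * xW K n (I k)) =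
            if k = i then yW K n (I i) * xW K n (I i) else 0 := by
          intro k
          rw [mul_assoc, ← mul_assoc (xW K n (J i)), hJcross i k]
          by_cases hk : k = i
          · subst hk; simp
          · rw [if_neg (fun he => hk he.symm), if_neg hk, zero_mul, mul_zero]
        rw [Finset.sum_congr rfl fun k _ => hterm k]
        simp
    _ = 1 := hcpcI


/-- If `{I_1,…,I_m}` and `{J_1,…,J_m}` are complete prefix codes each consisting of `m`
distinct words, then `α = ∑ y_{I_i} x_{J_i}` is a unitary of `L_n`. -/
theorem unitarity_of_cpc_pair (K : Type) [Field K] (n : ℕ) (hn : 2 ≤ n)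
    (m : ℕ) (hm : 1 ≤ m) (I J : Fin m → List (Fin n))
    (hI : Function.Injective I) (hJ : Function.Injective J)
    (hIc : IsCPC n (Set.range I)) (hJc : IsCPC n (Set.range J))
    (α : Leavitt K n) (hα : α = ∑ i, yW K n (I i) * xW K n (J i)) :
    α * lstar K n α = 1 ∧ lstar K n α * α = 1 := by
  have hstar : lstar K n α = ∑ i, yW K n (J i) * xW K n (I i) := by
    rw [hα, lstar_sum]
    exact Finset.sum_congr rfl fun i _ => by rw [lstar_mul, lstar_yW, lstar_xW]
  rw [hstar, hα]
  exact ⟨unit_aux K n hn m I J hI hJ hIc hJc, unit_aux K n hn m J I hJ hI hJc hIc⟩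
end
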